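/- Let T be a closed subset of [0,1] containing 0 and 1. For every h ∈ H_T and h̃ ∈ H¹, one has |⟨h, J(h̃)⟩_{H_T}| ≤ 2 ‖h‖_{H_T} ‖h̃‖_{H¹}, where J(h̃) is the restriction of h̃ to T, which lies in H_T. -/

import Mathlib

open MeasureTheory Set
open scoped ENNReal Classical

noncomputable def rhoBar (T : Set ℝ) (t : ℝ) : ℝ :=
  if t = 0 then 0 else sSup {u | u ∈ T ∧ u < t}

noncomputable def sigmaBar (T : Set ℝ) (t : ℝ) : ℝ :=
  if t = 1 then 1 else sInf {u | u ∈ T ∧ t < u}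

noncomputable def lamDelta (T : Set ℝ) : Measure ℝ :=
  Measure.map (rhoBar T) (volume.restrict (Icc 0 1))

noncomputable def htilde (g : ℝ → ℝ) (t : ℝ) : ℝ := ∫ s in Ico (0:ℝ) t, g s

noncomputable def jDensity (T : Set ℝ) (g : ℝ → ℝ) (t : ℝ) : ℝ :=
  if sigmaBar T t = t then g t
  else (htilde g (sigmaBar T t) - htilde g t) / (sigmaBar T t - t)

noncomputable def gDot (T : Set ℝ) (hΔ : ℝ → ℝ) (s : ℝ) : ℝ :=
  if s ∈ T then hΔ s else hΔ (rhoBar T s)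

namespace Stmt12Aux

variable {T : Set ℝ}

lemma bddAbove_lt (hTsub : T ⊆ Icc 0 1) (t : ℝ) : BddAbove {u | u ∈ T ∧ u < t} :=
  ⟨1, fun u hu => (hTsub hu.1).2⟩

lemma bddBelow_gt (hTsub : T ⊆ Icc 0 1) (t : ℝ) : BddBelow {u | u ∈ T ∧ t < u} :=
  ⟨0, fun u hu => (hTsub hu.1).1⟩

lemma lt_nonempty (h0T : (0:ℝ) ∈ T) {t : ℝ} (ht : 0 < t) : {u | u ∈ T ∧ u < t}.Nonempty :=
  ⟨0, h0T, ht⟩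

lemma gt_nonempty (h1T : (1:ℝ) ∈ T) {t : ℝ} (ht : t < 1) : {u | u ∈ T ∧ t < u}.Nonempty :=
  ⟨1, h1T, ht⟩

lemma rhoBar_le (h0T : (0:ℝ) ∈ T) {t : ℝ} (ht : 0 ≤ t) : rhoBar T t ≤ t := by
  rcases eq_or_lt_of_le ht with h | h
  · simp [rhoBar, ← h]
  · rw [rhoBar, if_neg h.ne']
    exact csSup_le (lt_nonempty h0T h) fun u hu => hu.2.le

lemma rhoBar_neg (hTsub : T ⊆ Icc 0 1) {t : ℝ} (ht : t < 0) : rhoBar T t = 0 := by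
  rw [rhoBar, if_neg ht.ne]
  have : {u | u ∈ T ∧ u < t} = ∅ := by
    ext u
    simp only [mem_setOf_eq, mem_empty_iff_false, iff_false, not_and]
    intro hu hut
    have := (hTsub hu).1
    linarith
  rw [this, Real.sSup_empty]

lemma rhoBar_nonneg (hTsub : T ⊆ Icc 0 1) (h0T : (0:ℝ) ∈ T) (t : ℝ) : 0 ≤ rhoBar T t := by
  rcases lt_trichotomy t 0 with h | h | h
  · rw [rhoBar_neg hTsub h]
  · simp [rhoBar, h]
  · rw [rhoBar, if_neg h.ne']
    exact le_csSup (bddAbove_lt hTsub t) ⟨h0T, h⟩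

lemma rhoBar_mono (hTsub : T ⊆ Icc 0 1) (h0T : (0:ℝ) ∈ T) : Monotone (rhoBar T) := by
  intro a b hab
  rcases le_or_gt a 0 with ha | ha
  · rcases ha.lt_or_eq with ha' | ha'
    · rw [rhoBar_neg hTsub ha']; exact rhoBar_nonneg hTsub h0T b
    · rw [ha']; simpa [rhoBar] using rhoBar_nonneg hTsub h0T b
  · have hb : 0 < b := lt_of_lt_of_le ha hab
    rw [rhoBar, rhoBar, if_neg ha.ne', if_neg hb.ne']
    exact csSup_le_csSup (bddAbove_lt hTsub b) (lt_nonempty h0T ha)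
      fun u hu => ⟨hu.1, lt_of_lt_of_le hu.2 hab⟩

lemma measurable_rhoBar (hTsub : T ⊆ Icc 0 1) (h0T : (0:ℝ) ∈ T) : Measurable (rhoBar T) :=
  (rhoBar_mono hTsub h0T).measurable

lemma rhoBar_mem (hT : IsClosed T) (hTsub : T ⊆ Icc 0 1) (h0T : (0:ℝ) ∈ T) {t : ℝ}
    (ht : 0 ≤ t) : rhoBar T t ∈ T := by
  rcases eq_or_lt_of_le ht with h | h
  · simpa [rhoBar, ← h] using h0T
  · rw [rhoBar, if_neg h.ne']
    have h1 := csSup_mem_closure (lt_nonempty h0T h) (bddAbove_lt hTsub t)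
    exact (hT.closure_subset_iff.2 fun u hu => hu.1) h1

lemma le_rhoBar (hTsub : T ⊆ Icc 0 1) {u t : ℝ} (hu : u ∈ T) (hut : u < t) :
    u ≤ rhoBar T t := by
  have h0u := (hTsub hu).1
  have ht : t ≠ 0 := by intro h; rw [h] at hut; linarith
  rw [rhoBar, if_neg ht]
  exact le_csSup (bddAbove_lt hTsub t) ⟨hu, hut⟩

lemma le_sigmaBar (h1T : (1:ℝ) ∈ T) {t : ℝ} (ht : t ≤ 1) : t ≤ sigmaBar T t := by
  rcases eq_or_lt_of_le ht with h | h
  · simp [sigmaBar, h]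
  · rw [sigmaBar, if_neg h.ne]
    exact le_csInf (gt_nonempty h1T h) fun u hu => hu.2.le

lemma sigmaBar_le (hTsub : T ⊆ Icc 0 1) {u t : ℝ} (hu : u ∈ T) (htu : t < u) :
    sigmaBar T t ≤ u := by
  have h1u := (hTsub hu).2
  have ht : t ≠ 1 := by intro h; rw [h] at htu; linarith
  rw [sigmaBar, if_neg ht]
  exact csInf_le (bddBelow_gt hTsub t) ⟨hu, htu⟩

lemma sigmaBar_mem (hT : IsClosed T) (hTsub : T ⊆ Icc 0 1) (h1T : (1:ℝ) ∈ T) {t : ℝ}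
    (ht : t ≤ 1) : sigmaBar T t ∈ T := by
  rcases eq_or_lt_of_le ht with h | h
  · simpa [sigmaBar, h] using h1T
  · rw [sigmaBar, if_neg h.ne]
    have h1 := csInf_mem_closure (gt_nonempty h1T h) (bddBelow_gt hTsub t)
    exact (hT.closure_subset_iff.2 fun u hu => hu.1) h1

lemma sigmaBar_le_one (hTsub : T ⊆ Icc 0 1) (h1T : (1:ℝ) ∈ T) {t : ℝ} (ht : t ≤ 1) :
    sigmaBar T t ≤ 1 := by
  rcases eq_or_lt_of_le ht with h | h
  · simp [sigmaBar, h]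
  · exact sigmaBar_le hTsub h1T h

lemma measurable_sigmaBar (hTsub : T ⊆ Icc 0 1) (h1T : (1:ℝ) ∈ T) :
    Measurable (sigmaBar T) := by
  set F : ℝ → ℝ := fun t => if 1 ≤ t then 1 else sInf {u | u ∈ T ∧ t < u} with hF
  have hFmono : Monotone F := by
    intro a b hab
    by_cases ha : 1 ≤ a
    · simp only [hF, if_pos ha, if_pos (ha.trans hab), le_refl]
    · push_neg at ha
      by_cases hb : 1 ≤ b
      · simp only [hF, if_neg (not_le.2 ha), if_pos hb]
        exact csInf_le (bddBelow_gt hTsub a) ⟨h1T, ha⟩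
      · push_neg at hb
        simp only [hF, if_neg (not_le.2 ha), if_neg (not_le.2 hb)]
        exact csInf_le_csInf (bddBelow_gt hTsub a) (gt_nonempty h1T hb)
          fun u hu => ⟨hu.1, lt_of_le_of_lt hab hu.2⟩
  have heq : sigmaBar T = fun t => if t = 1 then 1 else if t < 1 then F t else 0 := by
    funext t
    rcases lt_trichotomy t 1 with h | h | h
    · rw [sigmaBar, if_neg h.ne, if_neg h.ne, if_pos h, hF]
      simp only [if_neg (not_le.2 h)]
    · simp [sigmaBar, h]
    · rw [sigmaBar, if_neg h.ne', if_neg h.ne', if_neg (not_lt.2 h.le)]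
      have : {u | u ∈ T ∧ t < u} = ∅ := by
        ext u
        simp only [mem_setOf_eq, mem_empty_iff_false, iff_false, not_and]
        intro hu hut
        have := (hTsub hu).2
        linarith
      rw [this, Real.sInf_empty]
  rw [heq]
  refine Measurable.ite (MeasurableSet.singleton 1) measurable_const ?_
  exact Measurable.ite measurableSet_Iio hFmono.measurable measurable_const

lemma sigmaBar_rhoBar_ge (hT : IsClosed T) (hTsub : T ⊆ Icc 0 1) (h0T : (0:ℝ) ∈ T)
    (h1T : (1:ℝ) ∈ T) {s : ℝ} (hs0 : 0 < s) (hs1 : s ≤ 1) (hlt : rhoBar T s < s) :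
    s ≤ sigmaBar T (rhoBar T s) := by
  set r := rhoBar T s with hr
  have hr1 : r < 1 := lt_of_lt_of_le hlt hs1
  rw [sigmaBar, if_neg hr1.ne]
  refine le_csInf (gt_nonempty h1T hr1) ?_
  rintro u ⟨huT, hru⟩
  by_contra hus
  push_neg at hus
  have : u ≤ r := le_rhoBar hTsub huT hus
  linarith

lemma rhoBar_gap (hTsub : T ⊆ Icc 0 1) {r s : ℝ} (hrT : r ∈ T)
    (hs : s ∈ Ioc r (sigmaBar T r)) : rhoBar T s = r := by
  obtain ⟨hrs, hsσ⟩ := hs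
  have hr0 : 0 ≤ r := (hTsub hrT).1
  have hs0 : 0 < s := lt_of_le_of_lt hr0 hrs
  rw [rhoBar, if_neg hs0.ne']
  apply le_antisymm
  · refine csSup_le ⟨r, hrT, hrs⟩ ?_
    rintro u ⟨huT, hus⟩
    by_contra h
    push_neg at h
    have := sigmaBar_le hTsub huT h
    linarith
  · exact le_csSup (bddAbove_lt hTsub s) ⟨hrT, hrs⟩

lemma R_countable (hTsub : T ⊆ Icc 0 1) (h1T : (1:ℝ) ∈ T) :
    Set.Countable {r | r ∈ T ∧ sigmaBar T r ≠ r} := by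
  apply Set.PairwiseDisjoint.countable_of_Ioo (y := sigmaBar T)
  · rintro a ⟨haT, haσ⟩ b ⟨hbT, hbσ⟩ hab
    rcases hab.lt_or_gt with h | h
    · have hba := sigmaBar_le hTsub hbT h
      refine Set.disjoint_left.2 fun x hxa hxb => ?_
      exact absurd (hxa.2.trans_le hba) (not_lt.2 hxb.1.le)
    · have hab' := sigmaBar_le hTsub haT h
      refine Set.disjoint_left.2 fun x hxa hxb => ?_
      exact absurd (hxb.2.trans_le hab') (not_lt.2 hxa.1.le)
  · rintro r ⟨hrT, hrσ⟩
    exact lt_of_le_of_ne (le_sigmaBar h1T (hTsub hrT).2) (Ne.symm hrσ)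

/-- Cauchy-Schwarz for integrals. -/
lemma cs_integral {ν : Measure ℝ} {f k : ℝ → ℝ}
    (hf2 : Integrable (fun x => f x ^ 2) ν) (hk2 : Integrable (fun x => k x ^ 2) ν)
    (hfk : Integrable (fun x => f x * k x) ν) :
    |∫ x, f x * k x ∂ν| ≤ Real.sqrt (∫ x, f x ^ 2 ∂ν) * Real.sqrt (∫ x, k x ^ 2 ∂ν) := by
  set A := ∫ x, f x ^ 2 ∂ν with hA
  set B := ∫ x, k x ^ 2 ∂ν with hB
  set C := ∫ x, f x * k x ∂ν with hC
  have hA0 : 0 ≤ A := integral_nonneg fun x => sq_nonneg _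
  have hB0 : 0 ≤ B := integral_nonneg fun x => sq_nonneg _
  have key : C ^ 2 ≤ A * B := by
    have hq : ∀ t : ℝ, 0 ≤ A * (t * t) + (2 * C) * t + B := by
      intro t
      have h1 : 0 ≤ ∫ x, (t * f x + k x) ^ 2 ∂ν := integral_nonneg fun x => sq_nonneg _
      have h2 : (fun x => (t * f x + k x) ^ 2)
          = fun x => (t ^ 2) * f x ^ 2 + (2 * t) * (f x * k x) + k x ^ 2 := by
        funext x; ring
      rw [h2] at h1
      have i1 : Integrable (fun x => t ^ 2 * f x ^ 2) ν := hf2.const_mul _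
      have i2 : Integrable (fun x => 2 * t * (f x * k x)) ν := hfk.const_mul _
      have i12 : Integrable (fun x => t ^ 2 * f x ^ 2 + 2 * t * (f x * k x)) ν := i1.add i2
      rw [integral_add i12 hk2, integral_add i1 i2,
        integral_const_mul, integral_const_mul] at h1
      nlinarith [h1]
    have hd := discrim_le_zero hq
    rw [discrim] at hd
    nlinarith [hd]
  have h1 : |C| = Real.sqrt (C ^ 2) := (Real.sqrt_sq_eq_abs C).symm
  rw [h1, ← Real.sqrt_mul hA0]
  exact Real.sqrt_le_sqrt key

lemma cs_set {A : Set ℝ} {f : ℝ → ℝ} (hfin : volume A ≠ ∞)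
    (hf1 : IntegrableOn f A volume) (hf2 : IntegrableOn (fun x => f x ^ 2) A volume) :
    (∫ x in A, f x) ^ 2 ≤ (volume A).toReal * ∫ x in A, f x ^ 2 := by
  have hfm : IsFiniteMeasure (volume.restrict A) :=
    ⟨by rw [Measure.restrict_apply_univ]; exact hfin.lt_top⟩
  have hone : Integrable (fun x => (1:ℝ) * 1) (volume.restrict A) := by
    simpa using (integrable_const (1:ℝ) (μ := volume.restrict A))
  have h := cs_integral (ν := volume.restrict A) (f := f) (k := fun _ => 1) hf2
    (by simpa using (integrable_const (1:ℝ) (μ := volume.restrict A))) (by simpa using hf1.integrable)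
  simp only [mul_one, one_pow] at h
  have hconst : ∫ _x in A, (1:ℝ) = (volume A).toReal := by
    simp [Measure.restrict_apply_univ, Measure.real]
  rw [hconst] at h
  have hI2 : 0 ≤ ∫ x in A, f x ^ 2 := integral_nonneg fun x => sq_nonneg _
  have habs : (∫ x in A, f x) ^ 2 ≤ (Real.sqrt (∫ x in A, f x ^ 2) * Real.sqrt ((volume A).toReal)) ^ 2 := by
    rw [← Real.sqrt_sq_eq_abs] at h
    have h0 : 0 ≤ Real.sqrt (∫ x in A, f x ^ 2) * Real.sqrt ((volume A).toReal) :=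
      mul_nonneg (Real.sqrt_nonneg _) (Real.sqrt_nonneg _)
    nlinarith [Real.sq_sqrt (sq_nonneg (∫ x in A, f x)), Real.sqrt_nonneg ((∫ x in A, f x)^2), h]
  calc (∫ x in A, f x) ^ 2 ≤ (Real.sqrt (∫ x in A, f x ^ 2) * Real.sqrt ((volume A).toReal)) ^ 2 := habs
    _ = (volume A).toReal * ∫ x in A, f x ^ 2 := by
        rw [mul_pow, Real.sq_sqrt hI2, Real.sq_sqrt ENNReal.toReal_nonneg]
        ring


noncomputable def Haux (g' : ℝ → ℝ) : ℝ → ℝ :=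
  fun t => ∫ x in (0:ℝ)..t, (Icc (0:ℝ) 1).indicator g' x

noncomputable def Jaux (T : Set ℝ) (g' : ℝ → ℝ) (t : ℝ) : ℝ :=
  if sigmaBar T t = t then g' t
  else (Haux g' (sigmaBar T t) - Haux g' t) / (sigmaBar T t - t)

lemma continuous_Haux {g' : ℝ → ℝ} (hg'i : IntegrableOn g' (Icc 0 1) volume) :
    Continuous (Haux g') :=
  (hg'i.integrable_indicator measurableSet_Icc).continuous_primitive 0

lemma measurable_Jaux (hTsub : T ⊆ Icc 0 1) (h1T : (1:ℝ) ∈ T) {g' : ℝ → ℝ}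
    (hg'm : Measurable g') (hg'i : IntegrableOn g' (Icc 0 1) volume) :
    Measurable (Jaux T g') := by
  have hσ := measurable_sigmaBar hTsub h1T
  have hH := (continuous_Haux hg'i).measurable
  refine Measurable.ite (measurableSet_eq_fun hσ measurable_id) hg'm ?_
  exact ((hH.comp hσ).sub hH).div (hσ.sub measurable_id)

lemma Haux_diff {g' : ℝ → ℝ} (hg'i : IntegrableOn g' (Icc 0 1) volume) {a b : ℝ}
    (h0a : 0 ≤ a) (hab : a ≤ b) (hb1 : b ≤ 1) :
    Haux g' b - Haux g' a = ∫ x in Ioc a b, g' x := by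
  have hint := hg'i.integrable_indicator measurableSet_Icc
  have h1 : Haux g' b - Haux g' a = ∫ x in a..b, (Icc (0:ℝ) 1).indicator g' x := by
    rw [Haux]
    exact intervalIntegral.integral_interval_sub_left hint.intervalIntegrable
      hint.intervalIntegrable
  rw [h1, intervalIntegral.integral_of_le hab]
  refine setIntegral_congr_fun measurableSet_Ioc fun x hx => ?_
  exact Set.indicator_of_mem (mem_Icc.mpr ⟨le_trans h0a hx.1.le, le_trans hx.2 hb1⟩) g'

lemma htilde_eq_Haux {g g' : ℝ → ℝ} (hgg' : g =ᵐ[volume.restrict (Icc 0 1)] g')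
    (hg'i : IntegrableOn g' (Icc 0 1) volume) {x : ℝ} (hx : x ∈ Icc (0:ℝ) 1) :
    htilde g x = Haux g' x := by
  have h0 : Haux g' 0 = 0 := intervalIntegral.integral_same
  have h1 : Haux g' x - Haux g' 0 = ∫ s in Ioc (0:ℝ) x, g' s :=
    Haux_diff hg'i le_rfl hx.1 hx.2
  rw [h0, sub_zero] at h1
  have h2 : (∫ s in Ioc (0:ℝ) x, g' s) = ∫ s in Ico (0:ℝ) x, g' s :=
    setIntegral_congr_set (Ioo_ae_eq_Ioc.symm.trans Ioo_ae_eq_Ico)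
  have h3 : (∫ s in Ico (0:ℝ) x, g' s) = ∫ s in Ico (0:ℝ) x, g s := by
    refine integral_congr_ae ?_
    refine ae_restrict_of_ae_restrict_of_subset (fun y hy => ?_) hgg'.symm
    exact mem_Icc.mpr ⟨(mem_Ico.mp hy).1, le_trans (mem_Ico.mp hy).2.le hx.2⟩
  rw [htilde, h1, h2, h3]

lemma jDensity_ae_Jaux (hT : IsClosed T) (hTsub : T ⊆ Icc 0 1) (h0T : (0:ℝ) ∈ T)
    (h1T : (1:ℝ) ∈ T) {g g' : ℝ → ℝ} (hgg' : g =ᵐ[volume.restrict (Icc 0 1)] g')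
    (hg'i : IntegrableOn g' (Icc 0 1) volume) :
    jDensity T g =ᵐ[lamDelta T] Jaux T g' := by
  have hnull : (volume.restrict (Icc 0 1)) {x | g x ≠ g' x} = 0 := by
    rw [Filter.EventuallyEq, ae_iff] at hgg'
    exact hgg'
  obtain ⟨M₀, hM₀sup, hM₀meas, hM₀null⟩ := exists_measurable_superset_of_null hnull
  have hσ := measurable_sigmaBar hTsub h1T
  set M : Set ℝ := (M₀ ∩ {t | sigmaBar T t = t}) ∪ Tᶜ with hM
  have hMmeas : MeasurableSet M :=
    (hM₀meas.inter (measurableSet_eq_fun hσ measurable_id)).union hT.measurableSet.compl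
  have hsub : {t | jDensity T g t ≠ Jaux T g' t} ⊆ M := by
    intro t ht
    by_contra htM
    have h1 : t ∉ M₀ ∩ {t | sigmaBar T t = t} := fun h => htM (Or.inl h)
    have h2 : t ∈ T := by
      by_contra h
      exact htM (Or.inr h)
    apply ht
    by_cases hσt : sigmaBar T t = t
    · have htM₀ : t ∉ M₀ := fun h => h1 ⟨h, hσt⟩
      have hgt : g t = g' t := by
        by_contra h
        exact htM₀ (hM₀sup h)
      rw [jDensity, Jaux, if_pos hσt, if_pos hσt, hgt]
    · have htT : t ∈ T := h2
      have ht1 : t ≤ 1 := (hTsub htT).2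
      have hσmem : sigmaBar T t ∈ Icc (0:ℝ) 1 := hTsub (sigmaBar_mem hT hTsub h1T ht1)
      rw [jDensity, Jaux, if_neg hσt, if_neg hσt,
        htilde_eq_Haux hgg' hg'i hσmem, htilde_eq_Haux hgg' hg'i (hTsub htT)]
  have hlamM : lamDelta T M = 0 := by
    rw [lamDelta, Measure.map_apply (measurable_rhoBar hTsub h0T) hMmeas,
      Measure.restrict_apply (hMmeas.preimage (measurable_rhoBar hTsub h0T))]
    have hsub2 : rhoBar T ⁻¹' M ∩ Icc 0 1 ⊆ {0} ∪ (M₀ ∩ Icc 0 1) := by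
      rintro s ⟨hsM, hs01⟩
      rcases eq_or_lt_of_le hs01.1 with h0s | h0s
      · exact Or.inl (by simp [← h0s])
      · right
        have hrT : rhoBar T s ∈ T := rhoBar_mem hT hTsub h0T h0s.le
        have hsM' : rhoBar T s ∈ M₀ ∩ {t | sigmaBar T t = t} := by
          rcases hsM with h | h
          · exact h
          · exact absurd hrT h
        have hρs : rhoBar T s = s := by
          rcases eq_or_lt_of_le (rhoBar_le h0T h0s.le) with h | h
          · exact h
          · have := sigmaBar_rhoBar_ge hT hTsub h0T h1T h0s hs01.2 h
            have := hsM'.2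
            simp only [mem_setOf_eq] at this
            linarith
        rw [hρs] at hsM'
        exact ⟨hsM'.1, hs01⟩
    refine measure_mono_null hsub2 ?_
    refine le_antisymm (le_trans (measure_union_le _ _) ?_) (zero_le)
    rw [Real.volume_singleton]
    rw [Measure.restrict_apply hM₀meas] at hM₀null
    rw [hM₀null]
    simp
  rw [Filter.EventuallyEq, ae_iff]
  exact measure_mono_null hsub hlamM

lemma integral_lamDelta (hTsub : T ⊆ Icc 0 1) (h0T : (0:ℝ) ∈ T) {f : ℝ → ℝ}
    (hf : StronglyMeasurable f) :
    ∫ t, f t ∂(lamDelta T) = ∫ s in Icc (0:ℝ) 1, f (rhoBar T s) := by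
  rw [lamDelta, integral_map (measurable_rhoBar hTsub h0T).aemeasurable
    hf.aestronglyMeasurable]

lemma setIntegral_lamDelta (hTsub : T ⊆ Icc 0 1) (h0T : (0:ℝ) ∈ T) {f : ℝ → ℝ}
    (hf : StronglyMeasurable f) {A : Set ℝ} (hA : MeasurableSet A) :
    ∫ t in A, f t ∂(lamDelta T)
      = ∫ s in rhoBar T ⁻¹' A ∩ Icc 0 1, f (rhoBar T s) := by
  rw [lamDelta, Measure.restrict_map (measurable_rhoBar hTsub h0T) hA,
    Measure.restrict_restrict (hA.preimage (measurable_rhoBar hTsub h0T)),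
    integral_map (measurable_rhoBar hTsub h0T).aemeasurable hf.aestronglyMeasurable]

def Rset (T : Set ℝ) : Set ℝ := {r | r ∈ T ∧ sigmaBar T r ≠ r}

def Sset (T : Set ℝ) : Set ℝ := ⋃ r ∈ Rset T, Ioc r (sigmaBar T r)

lemma Rset_countable (hTsub : T ⊆ Icc 0 1) (h1T : (1:ℝ) ∈ T) : (Rset T).Countable :=
  R_countable hTsub h1T

lemma gap_pos (hTsub : T ⊆ Icc 0 1) (h1T : (1:ℝ) ∈ T) {r : ℝ} (hr : r ∈ Rset T) :
    r < sigmaBar T r :=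
  lt_of_le_of_ne (le_sigmaBar h1T (hTsub hr.1).2) (Ne.symm hr.2)

lemma gap_subset_Icc (hTsub : T ⊆ Icc 0 1) (h1T : (1:ℝ) ∈ T) {r : ℝ} (hr : r ∈ Rset T) :
    Ioc r (sigmaBar T r) ⊆ Icc 0 1 := fun s hs =>
  ⟨le_trans (hTsub hr.1).1 hs.1.le, le_trans hs.2 (sigmaBar_le_one hTsub h1T (hTsub hr.1).2)⟩

lemma Sset_subset_Icc (hTsub : T ⊆ Icc 0 1) (h1T : (1:ℝ) ∈ T) : Sset T ⊆ Icc 0 1 :=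
  iUnion₂_subset fun r hr => gap_subset_Icc hTsub h1T hr

lemma measurableSet_Sset (hTsub : T ⊆ Icc 0 1) (h1T : (1:ℝ) ∈ T) :
    MeasurableSet (Sset T) :=
  MeasurableSet.biUnion (Rset_countable hTsub h1T) fun _ _ => measurableSet_Ioc

lemma gap_disjoint (hTsub : T ⊆ Icc 0 1) :
    ∀ a ∈ Rset T, ∀ b ∈ Rset T, a ≠ b →
      Disjoint (Ioc a (sigmaBar T a)) (Ioc b (sigmaBar T b)) := by
  have key : ∀ a ∈ Rset T, ∀ b ∈ Rset T, a < b →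
      Disjoint (Ioc a (sigmaBar T a)) (Ioc b (sigmaBar T b)) := by
    rintro a ha b hb hab
    have h1 : sigmaBar T a ≤ b := sigmaBar_le hTsub hb.1 hab
    refine Set.disjoint_left.2 fun x hxa hxb => ?_
    exact absurd (hxa.2.trans h1) (not_le.2 hxb.1)
  rintro a ha b hb hab
  rcases hab.lt_or_gt with h | h
  · exact key a ha b hb h
  · exact (key b hb a ha h).symm

lemma dense_point (hT : IsClosed T) (hTsub : T ⊆ Icc 0 1) (h0T : (0:ℝ) ∈ T)
    (h1T : (1:ℝ) ∈ T) {s : ℝ} (hs : s ∈ Ioc (0:ℝ) 1) (hS : s ∉ Sset T) (hR : s ∉ Rset T) :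
    rhoBar T s = s ∧ sigmaBar T s = s := by
  have hρ : rhoBar T s = s := by
    rcases eq_or_lt_of_le (rhoBar_le h0T hs.1.le) with h | h
    · exact h
    · exfalso
      apply hS
      have hrT : rhoBar T s ∈ T := rhoBar_mem hT hTsub h0T hs.1.le
      have hσ : s ≤ sigmaBar T (rhoBar T s) := sigmaBar_rhoBar_ge hT hTsub h0T h1T hs.1 hs.2 h
      exact mem_biUnion ⟨hrT, (lt_of_lt_of_le h hσ).ne'⟩ ⟨h, hσ⟩
  refine ⟨hρ, ?_⟩
  by_contra h
  exact hR ⟨hρ ▸ rhoBar_mem hT hTsub h0T hs.1.le, h⟩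

lemma Jaux_on_gap (hTsub : T ⊆ Icc 0 1) {g' : ℝ → ℝ} {r s : ℝ} (hr : r ∈ Rset T)
    (hs : s ∈ Ioc r (sigmaBar T r)) :
    Jaux T g' (rhoBar T s)
      = (Haux g' (sigmaBar T r) - Haux g' r) / (sigmaBar T r - r) := by
  rw [rhoBar_gap hTsub hr.1 hs, Jaux, if_neg hr.2]

lemma ofReal_integral_le {ν : Measure ℝ} {f : ℝ → ℝ} (hf : 0 ≤ᵐ[ν] f)
    (hfm : AEStronglyMeasurable f ν) :
    ENNReal.ofReal (∫ x, f x ∂ν) ≤ ∫⁻ x, ENNReal.ofReal (f x) ∂ν := by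
  rw [integral_eq_lintegral_of_nonneg_ae hf hfm]
  exact ENNReal.ofReal_toReal_le

lemma gap_lintegral_le (hT : IsClosed T) (hTsub : T ⊆ Icc 0 1) (h0T : (0:ℝ) ∈ T)
    (h1T : (1:ℝ) ∈ T) {g' : ℝ → ℝ} (hg'm : Measurable g')
    (hg'i : IntegrableOn g' (Icc 0 1) volume)
    (hg'sq : IntegrableOn (fun x => g' x ^ 2) (Icc 0 1) volume) {r : ℝ} (hr : r ∈ Rset T) :
    ∫⁻ s in Ioc r (sigmaBar T r), (‖Jaux T g' (rhoBar T s)‖₊ : ℝ≥0∞) ^ 2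
      ≤ ∫⁻ s in Ioc r (sigmaBar T r), (‖g' s‖₊ : ℝ≥0∞) ^ 2 := by
  set σr := sigmaBar T r with hσr
  have hrpos := gap_pos hTsub h1T hr
  have hgsub := gap_subset_Icc hTsub h1T hr
  set m : ℝ := σr - r with hm
  have hm0 : 0 < m := sub_pos.2 hrpos
  set c : ℝ := (Haux g' σr - Haux g' r) / m with hc
  have h1 : ∫⁻ s in Ioc r σr, (‖Jaux T g' (rhoBar T s)‖₊ : ℝ≥0∞) ^ 2
      = ∫⁻ _s in Ioc r σr, (‖c‖₊ : ℝ≥0∞) ^ 2 := by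
    refine setLIntegral_congr_fun measurableSet_Ioc ?_
    intro s hs
    beta_reduce
    rw [Jaux_on_gap hTsub hr hs]
  have hHd : Haux g' σr - Haux g' r = ∫ x in Ioc r σr, g' x :=
    Haux_diff hg'i (hTsub hr.1).1 hrpos.le (sigmaBar_le_one hTsub h1T (hTsub hr.1).2)
  have hvol : volume (Ioc r σr) = ENNReal.ofReal m := by
    rw [Real.volume_Ioc]
  have hcs : (∫ x in Ioc r σr, g' x) ^ 2 ≤ m * ∫ x in Ioc r σr, g' x ^ 2 := by
    have := cs_set (A := Ioc r σr) (f := g') (by rw [hvol]; exact ENNReal.ofReal_ne_top)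
      (hg'i.mono_set hgsub) (hg'sq.mono_set hgsub)
    rwa [hvol, ENNReal.toReal_ofReal hm0.le] at this
  have hkey : m * c ^ 2 ≤ ∫ x in Ioc r σr, g' x ^ 2 := by
    have hceq : m * c ^ 2 = (∫ x in Ioc r σr, g' x) ^ 2 / m := by
      rw [hc, hHd]
      field_simp
    rw [hceq, div_le_iff₀ hm0]
    nlinarith [hcs]
  rw [h1, setLIntegral_const]
  have h2 : (‖c‖₊ : ℝ≥0∞) ^ 2 * volume (Ioc r σr) = ENNReal.ofReal (c ^ 2 * m) := by
    rw [hvol, ← enorm_eq_nnnorm, Real.enorm_eq_ofReal_abs, ← ENNReal.ofReal_pow (abs_nonneg c), sq_abs,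
      ← ENNReal.ofReal_mul (sq_nonneg c)]
  rw [h2]
  have h3 : ENNReal.ofReal (c ^ 2 * m) ≤ ENNReal.ofReal (∫ x in Ioc r σr, g' x ^ 2) :=
    ENNReal.ofReal_le_ofReal (by linarith [hkey])
  refine le_trans h3 (le_trans (ofReal_integral_le (Filter.Eventually.of_forall fun x => sq_nonneg _)
    (hg'm.pow_const 2).aestronglyMeasurable) ?_)
  refine le_of_eq (lintegral_congr fun x => ?_)
  rw [← enorm_eq_nnnorm, Real.enorm_eq_ofReal_abs, ← ENNReal.ofReal_pow (abs_nonneg _), sq_abs]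

lemma gap_integral_eq (hT : IsClosed T) (hTsub : T ⊆ Icc 0 1) (h0T : (0:ℝ) ∈ T)
    (h1T : (1:ℝ) ∈ T) {g' : ℝ → ℝ} (hg'i : IntegrableOn g' (Icc 0 1) volume)
    {r : ℝ} (hr : r ∈ Rset T) :
    ∫ s in Ioc r (sigmaBar T r), Jaux T g' (rhoBar T s)
      = ∫ s in Ioc r (sigmaBar T r), g' s := by
  set σr := sigmaBar T r with hσr
  have hrpos := gap_pos hTsub h1T hr
  set m : ℝ := σr - r with hm
  have hm0 : 0 < m := sub_pos.2 hrpos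
  set c : ℝ := (Haux g' σr - Haux g' r) / m with hc
  have h1 : ∫ s in Ioc r σr, Jaux T g' (rhoBar T s) = ∫ _s in Ioc r σr, c := by
    refine setIntegral_congr_fun measurableSet_Ioc fun s hs => ?_
    rw [Jaux_on_gap hTsub hr hs]
  have hHd : Haux g' σr - Haux g' r = ∫ x in Ioc r σr, g' x :=
    Haux_diff hg'i (hTsub hr.1).1 hrpos.le (sigmaBar_le_one hTsub h1T (hTsub hr.1).2)
  rw [h1, setIntegral_const, Real.volume_real_Ioc_of_le hrpos.le, smul_eq_mul,
    hc, hHd]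
  field_simp
  rw [hm, hσr]
  ring

lemma ae_set_helper (hTsub : T ⊆ Icc 0 1) (h1T : (1:ℝ) ∈ T) {A B : Set ℝ}
    (h1 : A \ B ⊆ insert (0:ℝ) (Rset T)) (h2 : B ⊆ A) : A =ᵐ[volume] B := by
  refine (MeasureTheory.ae_eq_set).2 ⟨?_, ?_⟩
  · exact measure_mono_null h1 (((Rset_countable hTsub h1T).insert 0).measure_zero volume)
  · rw [diff_eq_empty.2 h2]
    exact measure_empty

lemma w_eq_on_D (hT : IsClosed T) (hTsub : T ⊆ Icc 0 1) (h0T : (0:ℝ) ∈ T)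
    (h1T : (1:ℝ) ∈ T) {g' : ℝ → ℝ} {s : ℝ}
    (hs : s ∈ Ioc (0:ℝ) 1 \ (Sset T ∪ Rset T)) :
    Jaux T g' (rhoBar T s) = g' s := by
  obtain ⟨hρ, hσ⟩ := dense_point hT hTsub h0T h1T hs.1 (fun h => hs.2 (Or.inl h))
    (fun h => hs.2 (Or.inr h))
  rw [hρ, Jaux, if_pos hσ]

lemma key_lintegral (hT : IsClosed T) (hTsub : T ⊆ Icc 0 1) (h0T : (0:ℝ) ∈ T)
    (h1T : (1:ℝ) ∈ T) {g' : ℝ → ℝ} (hg'm : Measurable g')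
    (hg'i : IntegrableOn g' (Icc 0 1) volume)
    (hg'sq : IntegrableOn (fun x => g' x ^ 2) (Icc 0 1) volume) :
    ∫⁻ s in Icc (0:ℝ) 1, (‖Jaux T g' (rhoBar T s)‖₊ : ℝ≥0∞) ^ 2
      ≤ ∫⁻ s in Icc (0:ℝ) 1, (‖g' s‖₊ : ℝ≥0∞) ^ 2 := by
  classical
  set D : Set ℝ := Ioc (0:ℝ) 1 \ (Sset T ∪ Rset T) with hD
  have hRc := Rset_countable hTsub h1T
  haveI : Countable ↥(Rset T) := hRc.to_subtype
  have hSm := measurableSet_Sset hTsub h1T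
  have hRm : MeasurableSet (Rset T) := hRc.measurableSet
  have hDm : MeasurableSet D := measurableSet_Ioc.diff (hSm.union hRm)
  have hsetae : (Icc (0:ℝ) 1 : Set ℝ) =ᵐ[volume] ((D ∪ Sset T : Set ℝ)) := by
    refine ae_set_helper hTsub h1T ?_ ?_
    · rintro s ⟨hsIcc, hsn⟩
      rw [mem_insert_iff]
      by_cases h0 : s = 0
      · exact Or.inl h0
      · right
        by_contra hsR
        apply hsn
        by_cases hsS : s ∈ Sset T
        · exact Or.inr hsS
        · exact Or.inl ⟨⟨lt_of_le_of_ne hsIcc.1 (Ne.symm h0), hsIcc.2⟩,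
            fun h => h.elim hsS hsR⟩
    · exact union_subset (fun s hs => Ioc_subset_Icc_self hs.1) (Sset_subset_Icc hTsub h1T)
  have hdisj : Disjoint D (Sset T) := disjoint_left.2 fun s hsD hsS => hsD.2 (Or.inl hsS)
  rw [setLIntegral_congr hsetae, setLIntegral_congr hsetae,
    lintegral_union hSm hdisj, lintegral_union hSm hdisj]
  refine add_le_add (le_of_eq ?_) ?_
  · refine setLIntegral_congr_fun hDm (fun s hs => ?_)
    rw [w_eq_on_D hT hTsub h0T h1T hs]
  · have hSeq : Sset T = ⋃ r : ↥(Rset T), Ioc (r:ℝ) (sigmaBar T (r:ℝ)) :=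
      biUnion_eq_iUnion _ _
    have hpd : Pairwise (Function.onFun Disjoint fun r : ↥(Rset T) => Ioc (r:ℝ) (sigmaBar T (r:ℝ))) :=
      fun a b hab => gap_disjoint hTsub a a.2 b b.2 fun h => hab (Subtype.ext h)
    rw [hSeq, lintegral_iUnion (fun _ => measurableSet_Ioc) hpd,
      lintegral_iUnion (fun _ => measurableSet_Ioc) hpd]
    exact ENNReal.tsum_le_tsum fun r =>
      gap_lintegral_le hT hTsub h0T h1T hg'm hg'i hg'sq r.2

lemma key_integral (hT : IsClosed T) (hTsub : T ⊆ Icc 0 1) (h0T : (0:ℝ) ∈ T)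
    (h1T : (1:ℝ) ∈ T) {g' : ℝ → ℝ} (hg'i : IntegrableOn g' (Icc 0 1) volume)
    (hwi : IntegrableOn (fun s => Jaux T g' (rhoBar T s)) (Icc 0 1) volume)
    {t : ℝ} (htT : t ∈ T) (ht0 : 0 < t) :
    ∫ s in Ico (0:ℝ) t, Jaux T g' (rhoBar T s) = ∫ s in Ico (0:ℝ) t, g' s := by
  classical
  set D : Set ℝ := Ioc (0:ℝ) 1 \ (Sset T ∪ Rset T) with hD
  have ht1 : t ≤ 1 := (hTsub htT).2
  have hRc := Rset_countable hTsub h1T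
  haveI : Countable ↥(Rset T) := hRc.to_subtype
  have hSm := measurableSet_Sset hTsub h1T
  have hRm : MeasurableSet (Rset T) := hRc.measurableSet
  have hDm : MeasurableSet D := measurableSet_Ioc.diff (hSm.union hRm)
  have hDIcc : D ∩ Iio t ⊆ Icc 0 1 := fun s hs => Ioc_subset_Icc_self hs.1.1
  have hSIcc : Sset T ∩ Iio t ⊆ Icc 0 1 := fun s hs => Sset_subset_Icc hTsub h1T hs.1
  have hsetae : (Ico (0:ℝ) t : Set ℝ) =ᵐ[volume] (((D ∩ Iio t) ∪ (Sset T ∩ Iio t) : Set ℝ)) := by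
    refine ae_set_helper hTsub h1T ?_ ?_
    · rintro s ⟨hsIco, hsn⟩
      rw [mem_insert_iff]
      by_cases h0 : s = 0
      · exact Or.inl h0
      · right
        by_contra hsR
        apply hsn
        have hsIoc : s ∈ Ioc (0:ℝ) 1 :=
          ⟨lt_of_le_of_ne hsIco.1 (Ne.symm h0), le_trans hsIco.2.le ht1⟩
        by_cases hsS : s ∈ Sset T
        · exact Or.inr ⟨hsS, hsIco.2⟩
        · exact Or.inl ⟨⟨hsIoc, fun h => h.elim hsS hsR⟩, hsIco.2⟩
    · refine union_subset (fun s hs => ⟨hs.1.1.1.le, hs.2⟩) fun s hs => ⟨?_, hs.2⟩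
      exact (Sset_subset_Icc hTsub h1T hs.1).1
  have hdisj : Disjoint (D ∩ Iio t) (Sset T ∩ Iio t) :=
    Disjoint.mono inter_subset_left inter_subset_left
      (disjoint_left.2 fun s hsD hsS => hsD.2 (Or.inl hsS))
  have hDtm : MeasurableSet (D ∩ Iio t) := hDm.inter measurableSet_Iio
  have hStm : MeasurableSet (Sset T ∩ Iio t) := hSm.inter measurableSet_Iio
  rw [setIntegral_congr_set hsetae, setIntegral_congr_set hsetae,
    setIntegral_union hdisj hStm (hwi.mono_set hDIcc) (hwi.mono_set hSIcc),
    setIntegral_union hdisj hStm (hg'i.mono_set hDIcc) (hg'i.mono_set hSIcc)]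
  have hDpart : ∫ s in D ∩ Iio t, Jaux T g' (rhoBar T s) = ∫ s in D ∩ Iio t, g' s :=
    setIntegral_congr_fun hDtm fun s hs => w_eq_on_D hT hTsub h0T h1T hs.1
  have hSeq : Sset T = ⋃ r : ↥(Rset T), Ioc (r:ℝ) (sigmaBar T (r:ℝ)) :=
    biUnion_eq_iUnion _ _
  have hSieq : Sset T ∩ Iio t
      = ⋃ r : ↥(Rset T), (Ioc (r:ℝ) (sigmaBar T (r:ℝ)) ∩ Iio t) := by
    rw [hSeq, iUnion_inter]
  have hpd : Pairwise (Function.onFun Disjoint fun r : ↥(Rset T) =>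
      Ioc (r:ℝ) (sigmaBar T (r:ℝ)) ∩ Iio t) := fun a b hab =>
    Disjoint.mono inter_subset_left inter_subset_left
      (gap_disjoint hTsub a a.2 b b.2 fun h => hab (Subtype.ext h))
  have hSpart : ∫ s in Sset T ∩ Iio t, Jaux T g' (rhoBar T s)
      = ∫ s in Sset T ∩ Iio t, g' s := by
    rw [hSieq, integral_iUnion (fun _ => measurableSet_Ioc.inter measurableSet_Iio) hpd
        (by rw [← hSieq]; exact hwi.mono_set hSIcc),
      integral_iUnion (fun _ => measurableSet_Ioc.inter measurableSet_Iio) hpd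
        (by rw [← hSieq]; exact hg'i.mono_set hSIcc)]
    refine tsum_congr fun r => ?_
    rcases le_or_gt t (r:ℝ) with hle | hlt
    · have hemp : Ioc (r:ℝ) (sigmaBar T (r:ℝ)) ∩ Iio t = ∅ := by
        refine eq_empty_iff_forall_notMem.2 fun x ⟨hx1, hx2⟩ => ?_
        exact absurd (lt_trans hx2 (lt_of_le_of_lt hle hx1.1)) (lt_irrefl x)
      rw [hemp]
      simp
    · have hσt : sigmaBar T (r:ℝ) ≤ t := sigmaBar_le hTsub htT hlt
      have hae : (Ioc (r:ℝ) (sigmaBar T (r:ℝ)) ∩ Iio t : Set ℝ)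
          =ᵐ[volume] Ioc (r:ℝ) (sigmaBar T (r:ℝ)) := by
        refine (MeasureTheory.ae_eq_set).2 ⟨?_, ?_⟩
        · rw [diff_eq_empty.2 inter_subset_left]
          exact measure_empty
        · refine measure_mono_null (t := ({t} : Set ℝ)) (fun x hx => ?_) Real.volume_singleton
          obtain ⟨hx1, hx2⟩ := hx
          have hxt : ¬ x < t := fun h => hx2 ⟨hx1, h⟩
          have : x = t := le_antisymm (hx1.2.trans hσt) (not_lt.1 hxt)
          exact this ▸ rfl
      rw [setIntegral_congr_set hae, setIntegral_congr_set hae]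
      exact gap_integral_eq hT hTsub h0T h1T hg'i r.2
  rw [hDpart, hSpart]

lemma sq_integral_eq {A : Set ℝ} {F : ℝ → ℝ} (hF : Measurable F) :
    ∫ x in A, F x ^ 2 = (∫⁻ x in A, (‖F x‖₊ : ℝ≥0∞) ^ 2).toReal := by
  rw [integral_eq_lintegral_of_nonneg_ae (Filter.Eventually.of_forall fun x => sq_nonneg _)
    (hF.pow_const 2).aestronglyMeasurable]
  congr 1
  refine lintegral_congr fun x => ?_
  rw [← enorm_eq_nnnorm, Real.enorm_eq_ofReal_abs, ← ENNReal.ofReal_pow (abs_nonneg _), sq_abs]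

end Stmt12Aux

theorem stmt_12 (T : Set ℝ) (hT : IsClosed T) (hTsub : T ⊆ Icc 0 1)
    (h0T : (0:ℝ) ∈ T) (h1T : (1:ℝ) ∈ T)
    (hΔ g : ℝ → ℝ) (hh : MemLp hΔ 2 (lamDelta T))
    (hg : MemLp g 2 (volume.restrict (Icc 0 1))) :
    (∀ t ∈ T, htilde g t = ∫ s in Ico (0:ℝ) t ∩ T, jDensity T g s ∂(lamDelta T)) ∧
    |∫ s, hΔ s * jDensity T g s ∂(lamDelta T)| ≤
      2 * Real.sqrt (∫ s, (hΔ s)^2 ∂(lamDelta T)) * Real.sqrt (∫ s in Icc (0:ℝ) 1, (g s)^2) := by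
  classical
  open Stmt12Aux in
  haveI hfin : IsFiniteMeasure (volume.restrict (Icc (0:ℝ) 1)) := by
    constructor
    rw [Measure.restrict_apply_univ, Real.volume_Icc]
    exact ENNReal.ofReal_lt_top
  have hgm := hg.aestronglyMeasurable
  set g' : ℝ → ℝ := hgm.mk g with hg'def
  have hg'sm : StronglyMeasurable g' := hgm.stronglyMeasurable_mk
  have hg'm : Measurable g' := hg'sm.measurable
  have hgg' : g =ᵐ[volume.restrict (Icc 0 1)] g' := hgm.ae_eq_mk
  have hg'L2 : MemLp g' 2 (volume.restrict (Icc 0 1)) := hg.ae_eq hgg'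
  have hg'sq : IntegrableOn (fun x => g' x ^ 2) (Icc 0 1) volume := hg'L2.integrable_sq
  have hg'i : IntegrableOn g' (Icc 0 1) volume := hg'L2.integrable one_le_two
  have hhm := hh.aestronglyMeasurable
  set hΔ' : ℝ → ℝ := hhm.mk hΔ with hΔ'def
  have hΔ'sm : StronglyMeasurable hΔ' := hhm.stronglyMeasurable_mk
  have hΔae : hΔ =ᵐ[lamDelta T] hΔ' := hhm.ae_eq_mk
  have hΔ'L2 : MemLp hΔ' 2 (lamDelta T) := hh.ae_eq hΔae
  have hρm := measurable_rhoBar hTsub h0T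
  have hJm : Measurable (Jaux T g') := measurable_Jaux hTsub h1T hg'm hg'i
  set w : ℝ → ℝ := fun s => Jaux T g' (rhoBar T s) with hwdef
  have hwm : Measurable w := hJm.comp hρm
  have hjd : jDensity T g =ᵐ[lamDelta T] Jaux T g' :=
    jDensity_ae_Jaux hT hTsub h0T h1T hgg' hg'i
  have hkeyL := key_lintegral hT hTsub h0T h1T hg'm hg'i hg'sq
  have hLgfin : ∫⁻ s in Icc (0:ℝ) 1, (‖g' s‖₊ : ℝ≥0∞) ^ 2 < ∞ := by
    have h := hg'sq.hasFiniteIntegral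
    rw [HasFiniteIntegral] at h
    refine lt_of_eq_of_lt ?_ h
    refine lintegral_congr fun x => ?_
    rw [← enorm_eq_nnnorm, Real.enorm_eq_ofReal_abs, Real.enorm_eq_ofReal_abs,
      ← ENNReal.ofReal_pow (abs_nonneg _), sq_abs, abs_of_nonneg (sq_nonneg _)]
  have hwsqfin : ∫⁻ s in Icc (0:ℝ) 1, (‖w s‖₊ : ℝ≥0∞) ^ 2 < ∞ := lt_of_le_of_lt hkeyL hLgfin
  have hwsq : IntegrableOn (fun s => w s ^ 2) (Icc 0 1) volume := by
    refine ⟨(hwm.pow_const 2).aestronglyMeasurable, ?_⟩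
    rw [HasFiniteIntegral]
    refine lt_of_eq_of_lt ?_ hwsqfin
    refine lintegral_congr fun x => ?_
    rw [← enorm_eq_nnnorm, Real.enorm_eq_ofReal_abs, Real.enorm_eq_ofReal_abs,
      ← ENNReal.ofReal_pow (abs_nonneg _), sq_abs, abs_of_nonneg (sq_nonneg _)]
  have hwi : IntegrableOn w (Icc 0 1) volume := by
    refine Integrable.mono' (((integrable_const (1:ℝ)).add hwsq).div_const 2)
      hwm.aestronglyMeasurable (Filter.Eventually.of_forall fun s => ?_)
    have : ‖w s‖ = |w s| := rfl
    rw [this]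
    simp only [Pi.add_apply]
    nlinarith [sq_nonneg (|w s| - 1), sq_abs (w s), abs_nonneg (w s)]
  set v : ℝ → ℝ := fun s => hΔ' (rhoBar T s) with hvdef
  have hvm : Measurable v := hΔ'sm.measurable.comp hρm
  have hvL2 : MemLp v 2 (volume.restrict (Icc 0 1)) := by
    have h := (memLp_map_measure_iff hΔ'sm.aestronglyMeasurable hρm.aemeasurable).1 hΔ'L2
    exact h
  have hvsq : IntegrableOn (fun s => v s ^ 2) (Icc 0 1) volume := hvL2.integrable_sq
  have hvw : Integrable (fun s => v s * w s) (volume.restrict (Icc 0 1)) := by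
    refine Integrable.mono' ((hvsq.add hwsq).div_const 2)
      (hvm.mul hwm).aestronglyMeasurable (Filter.Eventually.of_forall fun s => ?_)
    have : ‖v s * w s‖ = |v s| * |w s| := abs_mul _ _
    rw [this]
    simp only [Pi.add_apply]
    nlinarith [sq_nonneg (|v s| - |w s|), sq_abs (v s), sq_abs (w s),
      abs_nonneg (v s), abs_nonneg (w s)]
  constructor
  · -- part 1
    intro t htT
    rcases eq_or_lt_of_le (hTsub htT).1 with h0t | h0t
    · subst h0t
      simp [htilde]
    · have hstep1 : ∫ s in Ico (0:ℝ) t ∩ T, jDensity T g s ∂(lamDelta T)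
          = ∫ s in Ico (0:ℝ) t ∩ T, Jaux T g' s ∂(lamDelta T) :=
        integral_congr_ae (ae_restrict_of_ae hjd)
      have hAm : MeasurableSet (Ico (0:ℝ) t ∩ T) := measurableSet_Ico.inter hT.measurableSet
      have hstep2 : ∫ s in Ico (0:ℝ) t ∩ T, Jaux T g' s ∂(lamDelta T)
          = ∫ s in rhoBar T ⁻¹' (Ico (0:ℝ) t ∩ T) ∩ Icc 0 1, w s :=
        setIntegral_lamDelta hTsub h0T hJm.stronglyMeasurable hAm
      have hpre : (rhoBar T ⁻¹' (Ico (0:ℝ) t ∩ T) ∩ Icc 0 1 : Set ℝ)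
          =ᵐ[volume] (Ico (0:ℝ) t : Set ℝ) := by
        refine (MeasureTheory.ae_eq_set).2 ⟨?_, ?_⟩
        · refine measure_mono_null (t := ({t} : Set ℝ)) (fun s hs => ?_) Real.volume_singleton
          obtain ⟨⟨hspre, hsIcc⟩, hsn⟩ := hs
          have hρlt : rhoBar T s < t := hspre.1.2
          have hst : s ≤ t := by
            by_contra h
            push_neg at h
            exact absurd (lt_of_le_of_lt (le_rhoBar hTsub htT h) hρlt) (lt_irrefl t)
          have : ¬ s < t := fun h => hsn ⟨hsIcc.1, h⟩
          exact (le_antisymm hst (not_lt.1 this)) ▸ rfl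
        · rw [diff_eq_empty.2 fun s hs => ?_]
          · exact measure_empty
          refine ⟨⟨⟨rhoBar_nonneg hTsub h0T s, lt_of_le_of_lt (rhoBar_le h0T hs.1) hs.2⟩,
            rhoBar_mem hT hTsub h0T hs.1⟩, ⟨hs.1, le_trans hs.2.le (hTsub htT).2⟩⟩
      rw [hstep1, hstep2, setIntegral_congr_set hpre,
        key_integral hT hTsub h0T h1T hg'i hwi htT h0t, htilde]
      refine integral_congr_ae (ae_restrict_of_ae_restrict_of_subset ?_ hgg')
      exact fun y hy => mem_Icc.mpr ⟨hy.1, le_trans hy.2.le (hTsub htT).2⟩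
  · -- part 2
    have he1 : ∫ s, hΔ s * jDensity T g s ∂(lamDelta T)
        = ∫ s, hΔ' s * Jaux T g' s ∂(lamDelta T) :=
      integral_congr_ae (hΔae.mul hjd)
    have he2 : ∫ s, hΔ' s * Jaux T g' s ∂(lamDelta T)
        = ∫ s in Icc (0:ℝ) 1, v s * w s :=
      integral_lamDelta hTsub h0T (hΔ'sm.mul hJm.stronglyMeasurable)
    have he3 : ∫ s, (hΔ s)^2 ∂(lamDelta T) = ∫ s in Icc (0:ℝ) 1, v s ^ 2 := by
      have h1 : ∫ s, (hΔ s)^2 ∂(lamDelta T) = ∫ s, (hΔ' s)^2 ∂(lamDelta T) :=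
        integral_congr_ae (by filter_upwards [hΔae] with x hx; rw [hx])
      rw [h1, integral_lamDelta hTsub h0T
        ((hΔ'sm.measurable.pow_const 2).stronglyMeasurable)]
    have he4 : ∫ s in Icc (0:ℝ) 1, (g s)^2 = ∫ s in Icc (0:ℝ) 1, g' s ^ 2 :=
      integral_congr_ae (by filter_upwards [hgg'] with x hx; rw [hx])
    have hww : ∫ s in Icc (0:ℝ) 1, w s ^ 2 ≤ ∫ s in Icc (0:ℝ) 1, g' s ^ 2 := by
      rw [sq_integral_eq hwm, sq_integral_eq hg'm]
      exact ENNReal.toReal_mono hLgfin.ne hkeyL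
    have hcs := cs_integral (ν := volume.restrict (Icc (0:ℝ) 1)) hvsq hwsq hvw
    rw [he1, he2]
    have hstep : Real.sqrt (∫ s in Icc (0:ℝ) 1, w s ^ 2)
        ≤ Real.sqrt (∫ s in Icc (0:ℝ) 1, (g s)^2) := by
      rw [he4]
      exact Real.sqrt_le_sqrt hww
    have hv0 : 0 ≤ Real.sqrt (∫ s in Icc (0:ℝ) 1, v s ^ 2) := Real.sqrt_nonneg _
    have hw0 : 0 ≤ Real.sqrt (∫ s in Icc (0:ℝ) 1, (g s)^2) := Real.sqrt_nonneg _
    calc |∫ s in Icc (0:ℝ) 1, v s * w s|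
        ≤ Real.sqrt (∫ s in Icc (0:ℝ) 1, v s ^ 2) * Real.sqrt (∫ s in Icc (0:ℝ) 1, w s ^ 2) := hcs
      _ ≤ Real.sqrt (∫ s in Icc (0:ℝ) 1, v s ^ 2) * Real.sqrt (∫ s in Icc (0:ℝ) 1, (g s)^2) :=
          mul_le_mul_of_nonneg_left hstep hv0
      _ ≤ 2 * Real.sqrt (∫ s, (hΔ s)^2 ∂(lamDelta T)) * Real.sqrt (∫ s in Icc (0:ℝ) 1, (g s)^2) := by
          rw [he3]
          nlinarith [mul_nonneg hv0 hw0]
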